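/- For every n ≥ 1, there is a language L_n over an alphabet of size n+2 such that L_n is recognized by a semantically deterministic transition-based nondeterministic Büchi automaton with 3n+3 states, but every deterministic transition-based Büchi automaton recognizing L_n has at least 2^n states. -/

import Mathlib

open Filter

variable {A Q : Type}

/-- Extension of a transition function to sets of states and finite words. -/
def extSet (δ : Q → A → Set Q) : Set Q → List A → Set Q
  | S, [] => S
  | S, a :: u => extSet δ (⋃ q ∈ S, δ q a) u

/-- A nondeterministic automaton on finite words (NFW), with a total
transition function. -/
structure NFW (A Q : Type) where
  init : Set Q
  δ : Q → A → Set Q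
  F : Set Q
  init_nonempty : init.Nonempty
  δ_nonempty : ∀ q a, (δ q a).Nonempty

/-- The language of finite words recognized by an NFW. -/
def NFW.Lang (N : NFW A Q) : Set (List A) :=
  {u | ∃ q ∈ extSet N.δ N.init u, q ∈ N.F}

/-- A transition-based nondeterministic Büchi automaton (tNBW). -/
structure tNBW (A Q : Type) where
  init : Set Q
  δ : Q → A → Set Q
  α : Set (Q × A × Q)
  init_nonempty : init.Nonempty
  δ_nonempty : ∀ q a, (δ q a).Nonempty

namespace tNBW

/-- `L(A^q)`: words having a run from `q` traversing `α`-transitions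
infinitely often. -/
def LangFrom (M : tNBW A Q) (q : Q) : Set (ℕ → A) :=
  {w | ∃ r : ℕ → Q, r 0 = q ∧ (∀ i, r (i + 1) ∈ M.δ (r i) (w i)) ∧
    ∃ᶠ i in atTop, (r i, w i, r (i + 1)) ∈ M.α}

def Lang (M : tNBW A Q) : Set (ℕ → A) :=
  {w | ∃ q ∈ M.init, w ∈ M.LangFrom q}

/-- Semantic determinism. -/
def SD (M : tNBW A Q) : Prop :=
  (∀ q₁ ∈ M.init, ∀ q₂ ∈ M.init, M.LangFrom q₁ = M.LangFrom q₂) ∧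
  ∀ q a, ∀ q₁ ∈ M.δ q a, ∀ q₂ ∈ M.δ q a, M.LangFrom q₁ = M.LangFrom q₂

end tNBW

/-- The infix `w[i..i+len-1]` of an infinite word. -/
def seg (w : ℕ → A) (i len : ℕ) : List A := List.ofFn fun k : Fin len => w (i + k)

/-- `∞R`: the words containing infinitely many disjoint infixes in `R`
(equivalently, `ε ∈ R`, or for every position there is an infix in `R`
starting beyond it). -/
def InfInfix (R : Set (List A)) : Set (ℕ → A) :=
  {w | ∀ N, ∃ i len, N ≤ i ∧ seg w i len ∈ R}


/-- A transition-based deterministic Büchi automaton (tDBW). -/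
structure tDBW (A Q : Type) where
  q0 : Q
  δ : Q → A → Q

def tDBW.run (D : tDBW A Q) (w : ℕ → A) : ℕ → Q
  | 0 => D.q0
  | i + 1 => D.δ (D.run w i) (w i)

def tDBW.Lang (D : tDBW A Q) (α : Set (Q × A × Q)) : Set (ℕ → A) :=
  {w | ∃ᶠ i in atTop, (D.run w i, w i, D.run w (i + 1)) ∈ α}

/-- The alphabet `Σ_n = {1,…,n, $, #}` of size `n+2`: `Sum.inr true` is `$`
and `Sum.inr false` is `#`. -/
abbrev Sig (n : ℕ) := Fin n ⊕ Bool

/-- A good word `$ · x · # · i` with `x ∈ [n]⁺` and `i` occurring in `x`. -/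
def GoodWord (n : ℕ) : Set (List (Sig n)) :=
  {z | ∃ (x : List (Fin n)) (i : Fin n), x ≠ [] ∧ i ∈ x ∧
    z = Sum.inr true :: x.map Sum.inl ++ [Sum.inr false, Sum.inl i]}

/-- `L_n = ∞R_n`, for `R_n` the set of good words. -/
def Ln (n : ℕ) : Set (ℕ → Sig n) := InfInfix (GoodWord n)


namespace SDP
variable {A Q : Type}

/-- repeat a list k times -/
def rep (u : List A) : ℕ → List A
  | 0 => []
  | k+1 => u ++ rep u k

@[simp] lemma rep_length (u : List A) (k : ℕ) : (rep u k).length = k * u.length := by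
  induction k with
  | zero => simp [rep]
  | succ k ih => simp [rep, ih]; ring

lemma rep_getElem (u : List A) (k j : ℕ) (hj : j < (rep u k).length) :
    (rep u k)[j] = u[j % u.length]'(Nat.mod_lt _ (by by_contra h; simp at h; simp [h] at hj)) := by
  induction k generalizing j with
  | zero => simp [rep] at hj
  | succ k ih =>
    have hu : 0 < u.length := by by_contra h; simp at h; simp [h] at hj
    by_cases h : j < u.length
    · simp only [rep]
      rw [List.getElem_append_left h]
      congr 1
      exact (Nat.mod_eq_of_lt h).symm
    · push_neg at h
      simp only [rep]
      rw [List.getElem_append_right h]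
      rw [ih (j - u.length) (by simp only [rep_length] at hj ⊢; rw [Nat.succ_mul] at hj; omega)]
      congr 1
      conv_rhs => rw [show j = (j - u.length) + u.length by omega]
      rw [Nat.add_mod_right]

/-- the infinite word v · u^ω (junk default d, u should be nonempty) -/
def wordOf (d : A) (v u : List A) : ℕ → A :=
  fun k => if k < v.length then v.getD k d else u.getD ((k - v.length) % u.length) d

lemma wordOf_lt (d : A) (v u : List A) {k : ℕ} (h : k < v.length) :
    wordOf d v u k = v.getD k d := if_pos h

lemma wordOf_ge (d : A) (v u : List A) {k : ℕ} (h : v.length ≤ k) :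
    wordOf d v u k = u.getD ((k - v.length) % u.length) d := if_neg (by omega)

def dstar (δ : Q → A → Q) (q : Q) (u : List A) : Q := u.foldl δ q

@[simp] lemma dstar_nil (δ : Q → A → Q) (q : Q) : dstar δ q [] = q := rfl

@[simp] lemma dstar_append (δ : Q → A → Q) (q : Q) (u v : List A) :
    dstar δ q (u ++ v) = dstar δ (dstar δ q u) v := by simp [dstar]

lemma dstar_take_succ (δ : Q → A → Q) (q : Q) (u : List A) {t : ℕ} (ht : t < u.length) :
    dstar δ q (u.take (t+1)) = δ (dstar δ q (u.take t)) u[t] := by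
  rw [List.take_succ, List.getElem?_eq_getElem ht]
  simp only [Option.toList_some, dstar, List.foldl_append, List.foldl_cons, List.foldl_nil]

lemma run_eq_dstar (D : tDBW A Q) (w : ℕ → A) (m : ℕ) :
    D.run w m = dstar D.δ D.q0 (seg w 0 m) := by
  induction m with
  | zero => simp [tDBW.run, seg, dstar]
  | succ m ih =>
    have : seg w 0 (m+1) = seg w 0 m ++ [w m] := by
      simp only [seg, List.ofFn_succ', List.concat_eq_append, Fin.coe_castSucc, Fin.val_last, zero_add]
    rw [tDBW.run, this, dstar_append, ih]
    rfl
end SDP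

namespace SDP
variable {A Q : Type}

section runs
variable (D : tDBW A Q) (α : Set (Q × A × Q)) (d : A) (v u : List A) (q : Q)

lemma wordOf_loop_letter (hu : u ≠ []) {k t : ℕ} (ht : t < u.length) :
    wordOf d v u (v.length + (k * u.length + t)) = u[t] := by
  rw [wordOf_ge d v u (by omega)]
  have h1 : v.length + (k * u.length + t) - v.length = k * u.length + t := by omega
  rw [h1, Nat.mul_add_mod' k u.length t, Nat.mod_eq_of_lt ht]
  exact List.getD_eq_getElem u d ht

lemma run_prefix (hv : dstar D.δ D.q0 v = q) : D.run (wordOf d v u) v.length = q := by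
  rw [run_eq_dstar]
  have : seg (wordOf d v u) 0 v.length = v := by
    apply List.ext_getElem (by simp [seg])
    intro i h1 h2
    simp only [seg, List.getElem_ofFn]
    rw [zero_add, wordOf_lt d v u (by simpa using h2)]
    exact List.getD_eq_getElem v d (by simpa using h2)
  rw [this, hv]

lemma run_loop (hv : dstar D.δ D.q0 v = q) (hq : dstar D.δ q u = q) (hu : u ≠ []) :
    ∀ k t, t ≤ u.length →
      D.run (wordOf d v u) (v.length + (k * u.length + t)) = dstar D.δ q (u.take t) := by
  have hul : 0 < u.length := List.length_pos_iff.2 hu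
  intro k
  induction k with
  | zero =>
    intro t ht
    induction t with
    | zero => simpa using run_prefix D d v u q hv
    | succ t ih =>
      have ht' : t < u.length := by omega
      have : v.length + (0 * u.length + (t+1)) = (v.length + (0 * u.length + t)) + 1 := by omega
      rw [this, tDBW.run, ih (by omega), wordOf_loop_letter d v u hu ht',
        dstar_take_succ D.δ q u ht']
  | succ k ih =>
    intro t ht
    induction t with
    | zero =>
      have h1 := ih u.length le_rfl
      rw [List.take_length] at h1
      have : v.length + ((k+1) * u.length + 0) = v.length + (k * u.length + u.length) := by
        rw [Nat.succ_mul]; omega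
      rw [this, h1, hq]
      simp
    | succ t iht =>
      have ht' : t < u.length := by omega
      have : v.length + ((k+1) * u.length + (t+1)) = (v.length + ((k+1) * u.length + t)) + 1 := by omega
      rw [this, tDBW.run, iht (by omega), wordOf_loop_letter d v u hu ht',
        dstar_take_succ D.δ q u ht']

/-- the transitions taken while reading `u` from `q` meet `α` -/
def HasAlpha (δ : Q → A → Q) (α : Set (Q × A × Q)) (q : Q) (u : List A) : Prop :=
  ∃ t, ∃ h : t < u.length,
    (dstar δ q (u.take t), u[t], dstar δ q (u.take (t+1))) ∈ α

lemma lang_of_loop_alpha (hv : dstar D.δ D.q0 v = q) (hq : dstar D.δ q u = q) (hu : u ≠ [])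
    (ha : HasAlpha D.δ α q u) : wordOf d v u ∈ D.Lang α := by
  obtain ⟨t, ht, hmem⟩ := ha
  have hul : 0 < u.length := List.length_pos_iff.2 hu
  rw [tDBW.Lang, Set.mem_setOf_eq, Filter.frequently_atTop]
  intro N
  refine ⟨v.length + (N * u.length + t), by nlinarith, ?_⟩
  have h1 := run_loop D d v u q hv hq hu N t (le_of_lt ht)
  have h2 := run_loop D d v u q hv hq hu N (t+1) (by omega)
  have h3 : v.length + (N * u.length + t) + 1 = v.length + (N * u.length + (t+1)) := by omega
  rw [h1, h3, h2, wordOf_loop_letter d v u hu ht]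
  exact hmem

lemma loop_alpha_of_lang (hv : dstar D.δ D.q0 v = q) (hq : dstar D.δ q u = q) (hu : u ≠ [])
    (hl : wordOf d v u ∈ D.Lang α) : HasAlpha D.δ α q u := by
  have hul : 0 < u.length := List.length_pos_iff.2 hu
  rw [tDBW.Lang, Set.mem_setOf_eq, Filter.frequently_atTop] at hl
  obtain ⟨m, hm, hmem⟩ := hl v.length
  set dd := m - v.length with hdd
  have hm' : m = v.length + (u.length * (dd / u.length) + dd % u.length) := by
    rw [Nat.div_add_mod]; omega
  set k := dd / u.length
  set t := dd % u.length with htdef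
  have ht : t < u.length := Nat.mod_lt _ hul
  refine ⟨t, ht, ?_⟩
  have h1 := run_loop D d v u q hv hq hu k t (le_of_lt ht)
  have h2 := run_loop D d v u q hv hq hu k (t+1) (by omega)
  rw [mul_comm u.length k] at hm'
  have h3 : v.length + (k * u.length + t) + 1 = v.length + (k * u.length + (t+1)) := by omega
  rw [hm', h1, h3, h2, wordOf_loop_letter d v u hu ht] at hmem
  exact hmem

end runs
end SDP


namespace SDP
variable {A Q : Type}

lemma take_append_le {a b : List A} {s : ℕ} (h : s ≤ a.length) :
    (a ++ b).take s = a.take s := by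
  rw [List.take_append]
  simp [Nat.sub_eq_zero_of_le h]

lemma hasAlpha_append (δ : Q → A → Q) (α : Set (Q × A × Q)) (q : Q) (a b : List A) :
    HasAlpha δ α q (a ++ b) ↔ HasAlpha δ α q a ∨ HasAlpha δ α (dstar δ q a) b := by
  constructor
  · rintro ⟨t, ht, hm⟩
    by_cases h : t < a.length
    · left
      refine ⟨t, h, ?_⟩
      rwa [take_append_le (by omega), take_append_le (by omega),
        List.getElem_append_left h] at hm
    · right
      push_neg at h
      have hlen : t < a.length + b.length := by simpa using ht
      refine ⟨t - a.length, by omega, ?_⟩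
      have c1 : (a ++ b).take t = a ++ b.take (t - a.length) := by
        rw [List.take_append, List.take_of_length_le h]
      have c2 : (a ++ b).take (t + 1) = a ++ b.take (t - a.length + 1) := by
        rw [List.take_append, List.take_of_length_le (by omega),
          show t + 1 - a.length = t - a.length + 1 by omega]
      simp only [c1, c2, dstar_append, List.getElem_append_right h] at hm
      exact hm
  · rintro (⟨t, ht, hm⟩ | ⟨t, ht, hm⟩)
    · refine ⟨t, by simp; omega, ?_⟩
      rwa [take_append_le (by omega), take_append_le (by omega),
        List.getElem_append_left ht]
    · refine ⟨a.length + t, by simp; omega, ?_⟩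
      have c1 : (a ++ b).take (a.length + t) = a ++ b.take t := List.take_length_add_append t
      have c2 : (a ++ b).take (a.length + t + 1) = a ++ b.take (t + 1) := by
        rw [show a.length + t + 1 = a.length + (t+1) by omega]; exact List.take_length_add_append (t+1)
      simp only [c1, c2, dstar_append, List.getElem_append_right (by omega : a.length ≤ a.length + t)]
      simpa using hm

end SDP

namespace SDP

variable {n : ℕ}

def dflt (n : ℕ) : Sig n := Sum.inr true

lemma mem_Ln_loop {v p g s u : List (Sig n)} (hu : u = p ++ g ++ s)
    (hg : g ∈ GoodWord n) : wordOf (dflt n) v u ∈ Ln n := by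
  have hgl : 0 < g.length := by
    obtain ⟨x, i, _, _, rfl⟩ := hg; simp
  have hul : 0 < u.length := by subst hu; simp; omega
  simp only [Ln, InfInfix, Set.mem_setOf_eq]
  intro N
  refine ⟨v.length + N * u.length + p.length, g.length, by nlinarith, ?_⟩
  have hseg : seg (wordOf (dflt n) v u) (v.length + N * u.length + p.length) g.length = g := by
    apply List.ext_getElem (by simp [seg])
    intro k h1 h2
    simp only [seg, List.getElem_ofFn]
    have hk : k < g.length := h2
    have hpk : p.length + k < u.length := by subst hu; simp; omega
    rw [wordOf_ge _ _ _ (by omega)]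
    have e1 : v.length + N * u.length + p.length + ↑(⟨k, h1⟩ : Fin _) - v.length
        = N * u.length + (p.length + k) := by simp; omega
    rw [e1, Nat.mul_add_mod' N u.length _, Nat.mod_eq_of_lt hpk, List.getD_eq_getElem _ _ hpk]
    subst hu
    rw [List.getElem_append_left (by simp; omega), List.getElem_append_right (by omega)]
    congr 1
    omega
  rw [hseg]
  exact hg

inductive Blockish (n : ℕ) : List (Sig n) → Prop
  | nil : Blockish n []
  | b1 (x : List (Fin n)) (r : List (Sig n)) : Blockish n r →
      Blockish n (Sum.inr true :: (x.map Sum.inl ++ (Sum.inr false :: r)))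
  | b2 (x : List (Fin n)) (i : Fin n) (r : List (Sig n)) : i ∉ x → Blockish n r →
      Blockish n (Sum.inr true :: (x.map Sum.inl ++ (Sum.inr false :: Sum.inl i :: r)))

lemma Blockish.append {a b : List (Sig n)} (ha : Blockish n a) (hb : Blockish n b) :
    Blockish n (a ++ b) := by
  induction ha with
  | nil => simpa
  | b1 x r hr ih => simpa [List.append_assoc] using Blockish.b1 x (r ++ b) ih
  | b2 x i r hi hr ih => simpa [List.append_assoc] using Blockish.b2 x i (r ++ b) hi ih

lemma blockish_rep {u : List (Sig n)} (hu : Blockish n u) (k : ℕ) : Blockish n (rep u k) := by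
  induction k with
  | zero => exact Blockish.nil
  | succ k ih => exact hu.append ih

lemma blockish_head {a : Sig n} {l : List (Sig n)} (h : Blockish n (a :: l)) :
    a = Sum.inr true := by cases h <;> rfl

lemma eat_dollar {a rest p q : List (Sig n)} (ha : Sum.inr true ∉ a) :
    a ++ rest = p ++ Sum.inr true :: q → ∃ p', rest = p' ++ Sum.inr true :: q ∧ p = a ++ p' := by
  induction a generalizing p with
  | nil => intro h; exact ⟨p, by simpa using h, by simp⟩
  | cons a0 a' ih =>
    intro h
    cases p with
    | nil =>
      simp only [List.nil_append, List.cons_append, List.cons.injEq] at h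
      exact absurd (h.1 ▸ (List.mem_cons_self (a := a0) (l := a'))) ha
    | cons b p' =>
      simp only [List.cons_append, List.cons.injEq] at h
      obtain ⟨p'', h1, h2⟩ := ih (fun hx => ha (List.mem_cons_of_mem _ hx)) h.2
      exact ⟨p'', h1, by rw [h.1, h2]; rfl⟩

lemma blockish_dollar {L : List (Sig n)} (hL : Blockish n L) :
    ∀ p q, L = p ++ Sum.inr true :: q →
    ∃ (x : List (Fin n)) (r : List (Sig n)), q = x.map Sum.inl ++ Sum.inr false :: r ∧
      (Blockish n r ∨ ∃ i r', i ∉ x ∧ r = Sum.inl i :: r' ∧ Blockish n r') := by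
  induction hL with
  | nil =>
    intro p q h
    exact absurd h (by cases p <;> simp)
  | b1 x r hr ih =>
    intro p q h
    cases p with
    | nil =>
      simp only [List.nil_append, List.cons.injEq] at h
      exact ⟨x, r, h.2.symm, Or.inl hr⟩
    | cons p0 p' =>
      simp only [List.cons_append, List.cons.injEq] at h
      have h' : (x.map Sum.inl ++ [Sum.inr false]) ++ r = p' ++ Sum.inr true :: q := by
        rw [List.append_assoc]; simpa using h.2
      obtain ⟨p'', h1, _⟩ := eat_dollar (by simp) h'
      exact ih p'' q h1
  | b2 x i r hi hr ih =>
    intro p q h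
    cases p with
    | nil =>
      simp only [List.nil_append, List.cons.injEq] at h
      exact ⟨x, Sum.inl i :: r, h.2.symm, Or.inr ⟨i, r, hi, rfl, hr⟩⟩
    | cons p0 p' =>
      simp only [List.cons_append, List.cons.injEq] at h
      have h' : (x.map Sum.inl ++ [Sum.inr false, Sum.inl i]) ++ r = p' ++ Sum.inr true :: q := by
        rw [List.append_assoc]; simpa using h.2
      obtain ⟨p'', h1, _⟩ := eat_dollar (by simp) h'
      exact ih p'' q h1

lemma maps_eq : ∀ (y x : List (Fin n)) (a b : List (Sig n)),
    y.map Sum.inl ++ Sum.inr false :: a = x.map Sum.inl ++ Sum.inr false :: b → y = x ∧ a = b := by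
  intro y
  induction y with
  | nil =>
    intro x a b h
    cases x with
    | nil => simpa using h
    | cons x0 x' => simp at h
  | cons y0 y' ih =>
    intro x a b h
    cases x with
    | nil => simp at h
    | cons x0 x' =>
      simp only [List.map_cons, List.cons_append, List.cons.injEq, Sum.inl.injEq] at h
      obtain ⟨h3, h4⟩ := ih x' a b h.2
      exact ⟨by rw [h.1, h3], h4⟩

lemma blockish_no_good {L p g s : List (Sig n)} (hL : Blockish n L)
    (hdec : L = p ++ g ++ s) (hg : g ∈ GoodWord n) : False := by
  obtain ⟨y, j, hy, hjy, rfl⟩ := hg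
  have h : L = p ++ Sum.inr true :: (y.map Sum.inl ++ Sum.inr false :: Sum.inl j :: s) := by
    rw [hdec]
    simp [List.append_assoc]
  obtain ⟨x, r, he, hc⟩ := blockish_dollar hL p _ h
  obtain ⟨hyx, hrs⟩ := maps_eq y x (Sum.inl j :: s) r (by simpa using he)
  rcases hc with hr | ⟨i, r', hinx, hre, _⟩
  · rw [← hrs] at hr
    exact absurd (blockish_head hr) (by simp)
  · rw [hre] at hrs
    simp only [List.cons.injEq, Sum.inl.injEq] at hrs
    exact hinx (hrs.1 ▸ (hyx ▸ hjy))

end SDP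
namespace SDP
variable {n : ℕ}

lemma not_mem_Ln_blockish {v u : List (Sig n)} (hB : Blockish n u) (hu : u ≠ []) :
    wordOf (dflt n) v u ∉ Ln n := by
  intro hmem
  have hul : 0 < u.length := List.length_pos_iff.2 hu
  simp only [Ln, InfInfix, Set.mem_setOf_eq] at hmem
  obtain ⟨i, len, hi, hgood⟩ := hmem v.length
  set dd := i - v.length with hdd
  set m := dd + len + 1 with hm
  have hmu : dd + len ≤ m * u.length := by nlinarith
  set L := rep u m with hL
  have hBL : Blockish n L := blockish_rep hB m
  have hseg : seg (wordOf (dflt n) v u) i len = (L.drop dd).take len := by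
    have hLlen : L.length = m * u.length := by rw [hL, rep_length]
    apply List.ext_getElem (by simp [seg]; omega)
    intro k h1 h2
    simp only [seg, List.getElem_ofFn, List.getElem_take, List.getElem_drop]
    rw [wordOf_ge _ _ _ (by omega)]
    have e1 : i + ↑(⟨k, h1⟩ : Fin _) - v.length = dd + k := by simp; omega
    rw [e1, rep_getElem u m (dd + k) (by simp only [rep_length]; simp [hLlen] at h2; omega),
      List.getD_eq_getElem _ _ (Nat.mod_lt _ hul)]
  have hdecomp : L = L.take dd ++ (L.drop dd).take len ++ ((L.drop dd).drop len) := by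
    rw [List.append_assoc, List.take_append_drop, List.take_append_drop]
  exact blockish_no_good hBL hdecomp (hseg ▸ hgood)

end SDP
namespace SDP
open Classical

lemma exists_idem {Q : Type} [Finite Q] (f : Q → Q) :
    ∃ K, 1 ≤ K ∧ ∀ q, f^[K] (f^[K] q) = f^[K] q := by
  have : ∃ x y : ℕ, x ≠ y ∧ f^[x] = f^[y] := by
    have := Finite.exists_ne_map_eq_of_infinite (fun k : ℕ => f^[k])
    simpa using this
  obtain ⟨x, y, hxy, he⟩ := this
  wlog hlt : x < y generalizing x y
  · exact this y x hxy.symm he.symm (by omega)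
  set a := x with ha
  set p := y - x with hp
  have hp1 : 1 ≤ p := by omega
  have he' : f^[a + p] = f^[a] := by
    rw [show a + p = y by omega, ← he]
  have claim1 : ∀ m, a ≤ m → f^[m + p] = f^[m] := by
    intro m hm
    have : m = (m - a) + a := by omega
    rw [this, show m - a + a + p = (m - a) + (a + p) by omega,
      Function.iterate_add f (m-a) (a+p), he', ← Function.iterate_add f (m-a) a]
  have claim2 : ∀ t m, a ≤ m → f^[m + t * p] = f^[m] := by
    intro t
    induction t with
    | zero => intro m hm; simp
    | succ t ih =>
      intro m hm
      rw [show m + (t+1) * p = (m + t * p) + p by ring, claim1 _ (by nlinarith), ih m hm]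
  refine ⟨(a+1) * p, by nlinarith, ?_⟩
  intro q
  rw [← Function.iterate_add_apply, show (a+1)*p + (a+1)*p = (a+1)*p + (a+1)*p from rfl,
    claim2 (a+1) ((a+1)*p) (by nlinarith)]

variable {n : ℕ}

noncomputable def block (S : Finset (Fin n)) : List (Sig n) :=
  Sum.inr true :: (S.toList.map Sum.inl ++ [Sum.inr false])

noncomputable def listS (n : ℕ) : List (Finset (Fin n)) := (Finset.univ : Finset (Finset (Fin n))).toList

noncomputable def Cw (n : ℕ) : List (Sig n) := ((listS n).map block).flatten

lemma exists_split (S : Finset (Fin n)) : ∃ l1 l2, listS n = l1 ++ S :: l2 :=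
  List.append_of_mem (by simp [listS])

noncomputable def prefL (S : Finset (Fin n)) : List (Finset (Fin n)) := (exists_split S).choose

noncomputable def suffL (S : Finset (Fin n)) : List (Finset (Fin n)) :=
  (exists_split S).choose_spec.choose

lemma split_spec (S : Finset (Fin n)) : listS n = prefL S ++ S :: suffL S :=
  (exists_split S).choose_spec.choose_spec

noncomputable def Aw (S : Finset (Fin n)) : List (Sig n) :=
  ((prefL S).map block).flatten ++ (Sum.inr true :: S.toList.map Sum.inl)

lemma C_decomp (S : Finset (Fin n)) :
    Cw n = Aw S ++ (Sum.inr false :: ((suffL S).map block).flatten) := by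
  rw [Cw, split_spec S]
  simp [Aw, block, List.flatten_append]

lemma blockish_block_join (l : List (Finset (Fin n))) : Blockish n ((l.map block).flatten) := by
  induction l with
  | nil => exact Blockish.nil
  | cons S l ih =>
    have := Blockish.b1 S.toList _ ih
    simpa [block, List.append_assoc] using this

lemma blockish_C : Blockish n (Cw n) := blockish_block_join _

lemma C_ne_nil (n : ℕ) : Cw n ≠ [] := by
  obtain ⟨l1, l2, hsp⟩ := exists_split (∅ : Finset (Fin n))
  rw [Cw, hsp]
  simp [block]

def loopW {Q : Type} (Dfun : Q → List (Sig n)) (ψ : Q → Q) : Q → ℕ → List (Sig n)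
  | _, 0 => []
  | z, k+1 => Dfun z ++ loopW Dfun ψ (ψ z) k

lemma dstar_loopW {Q : Type} (δ : Q → Sig n → Q) (Dfun : Q → List (Sig n)) (ψ : Q → Q)
    (hstep : ∀ z, dstar δ z (Dfun z) = ψ z) :
    ∀ k z, dstar δ z (loopW Dfun ψ z k) = ψ^[k] z := by
  intro k
  induction k with
  | zero => intro z; simp [loopW]
  | succ k ih =>
    intro z
    rw [loopW, dstar_append, hstep, ih, ← Function.iterate_succ_apply]

lemma dbw_lower {Q : Type} [Fintype Q] (hn : 1 ≤ n) (D : tDBW (Sig n) Q)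
    (α : Set (Q × Sig n × Q)) (hL : D.Lang α = Ln n) : 2 ^ n ≤ Fintype.card Q := by
  by_contra hcard
  push_neg at hcard
  obtain ⟨K, hK1, hKidem⟩ := exists_idem (fun q => dstar D.δ q (Cw n))
  set f : Q → Q := fun q => dstar D.δ q (Cw n) with hf
  set U := rep (Cw n) K with hU
  have hUne : U ≠ [] := by
    rw [hU, show K = (K-1)+1 by omega, rep]
    simp [C_ne_nil n]
  have hdstar_rep : ∀ (q : Q) k, dstar D.δ q (rep (Cw n) k) = f^[k] q := by
    intro q k
    induction k generalizing q with
    | zero => simp [rep]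
    | succ k ih =>
      rw [rep, dstar_append, ih, ← Function.iterate_succ_apply]
  have hcoll : ∀ z : Q, ∃ (S T : Finset (Fin n)) (i : Fin n),
      i ∈ S ∧ i ∉ T ∧ dstar D.δ z (Aw S) = dstar D.δ z (Aw T) := by
    intro z
    obtain ⟨S, T, hST, hEq⟩ := Fintype.exists_ne_map_eq_of_card_lt
      (fun S : Finset (Fin n) => dstar D.δ z (Aw S))
      (by rw [Fintype.card_finset, Fintype.card_fin]; exact hcard)
    by_cases h : ∃ i, i ∈ S ∧ i ∉ T
    · obtain ⟨i, h1, h2⟩ := h; exact ⟨S, T, i, h1, h2, hEq⟩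
    · push_neg at h
      have h2 : ∃ i, i ∈ T ∧ i ∉ S := by
        by_contra h2
        push_neg at h2
        exact hST (le_antisymm h h2)
      obtain ⟨i, h1, h2⟩ := h2
      exact ⟨T, S, i, h1, h2, hEq.symm⟩
  choose Sf Tf If hIS hIT hColl using hcoll
  set Dw : Q → List (Sig n) :=
    fun z => Aw (Sf z) ++ (Sum.inr false :: Sum.inl (If z) :: U) with hDw
  set Dw' : Q → List (Sig n) :=
    fun z => Aw (Tf z) ++ (Sum.inr false :: Sum.inl (If z) :: U) with hDw'
  set ψ : Q → Q := fun z => dstar D.δ z (Dw z) with hψ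
  have hψ' : ∀ z, dstar D.δ z (Dw' z) = ψ z := by
    intro z
    simp only [hψ, hDw, hDw', dstar_append, hColl z]
  set q1 := f^[K] D.q0 with hq1
  have hUdstar : ∀ q : Q, dstar D.δ q U = f^[K] q := fun q => hdstar_rep q K
  have hUloop : ∀ q : Q, dstar D.δ (f^[K] q) U = f^[K] q := by
    intro q; rw [hUdstar]; exact hKidem q
  have hz_form : ∀ j, ∃ q, ψ^[j] q1 = f^[K] q := by
    intro j
    induction j with
    | zero => exact ⟨D.q0, rfl⟩
    | succ j _ =>
      refine ⟨dstar D.δ (ψ^[j] q1) (Aw (Sf (ψ^[j] q1)) ++ [Sum.inr false, Sum.inl (If (ψ^[j] q1))]), ?_⟩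
      rw [Function.iterate_succ_apply']
      have hstep : ψ (ψ^[j] q1) = dstar D.δ (dstar D.δ (ψ^[j] q1)
          (Aw (Sf (ψ^[j] q1)) ++ [Sum.inr false, Sum.inl (If (ψ^[j] q1))])) U := by
        simp only [hψ, hDw]
        rw [show Aw (Sf (ψ^[j] q1)) ++ (Sum.inr false :: Sum.inl (If (ψ^[j] q1)) :: U)
            = (Aw (Sf (ψ^[j] q1)) ++ [Sum.inr false, Sum.inl (If (ψ^[j] q1))]) ++ U by simp,
          dstar_append]
      rw [hstep, hUdstar]
  have hUloopz : ∀ j, dstar D.δ (ψ^[j] q1) U = ψ^[j] q1 := by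
    intro j
    obtain ⟨q, hq⟩ := hz_form j
    rw [hq, hUloop]
  set chain : ℕ → List (Sig n) := fun j =>
    Nat.rec [] (fun j' acc => acc ++ Dw (ψ^[j'] q1)) j with hchainDef
  have hchain : ∀ j, dstar D.δ q1 (chain j) = ψ^[j] q1 := by
    intro j
    induction j with
    | zero => rfl
    | succ j ih =>
      show dstar D.δ q1 (chain j ++ Dw (ψ^[j] q1)) = _
      rw [dstar_append, ih, Function.iterate_succ_apply']
  have hreach : ∀ j, dstar D.δ D.q0 (U ++ chain j) = ψ^[j] q1 := by
    intro j
    rw [dstar_append, hUdstar, ← hq1, hchain]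
  have hUblockish : Blockish n U := blockish_rep blockish_C K
  have hUfree : ∀ j, ¬ HasAlpha D.δ α (ψ^[j] q1) U := by
    intro j ha
    have hmem := lang_of_loop_alpha D α (dflt n) (U ++ chain j) U (ψ^[j] q1)
      (hreach j) (hUloopz j) hUne ha
    rw [hL] at hmem
    exact not_mem_Ln_blockish hUblockish hUne hmem
  -- prefix property
  have hUprefix : ∀ S : Finset (Fin n), ∃ tail, U = Aw S ++ tail := by
    intro S
    refine ⟨(Sum.inr false :: ((suffL S).map block).flatten) ++ rep (Cw n) (K-1), ?_⟩
    rw [hU, show K = (K-1)+1 by omega, rep, C_decomp S]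
    simp
  -- cycle
  obtain ⟨x, y, hxy, hcyc0⟩ := Fintype.exists_ne_map_eq_of_card_lt
    (fun j : Fin (Fintype.card Q + 1) => ψ^[(j : ℕ)] q1) (by simp)
  have hcycex : ∃ j0 c, 1 ≤ c ∧ ψ^[j0 + c] q1 = ψ^[j0] q1 := by
    rcases Nat.lt_or_ge (x : ℕ) (y : ℕ) with h | h
    · exact ⟨x, y - x, by omega, by rw [show (x:ℕ) + ((y:ℕ) - x) = y by omega, hcyc0]⟩
    · have hxy' : (y : ℕ) < x := by
        rcases Nat.lt_or_ge (y:ℕ) (x:ℕ) with h' | h'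
        · exact h'
        · exact absurd (Fin.ext (le_antisymm h' h)) hxy
      exact ⟨y, (x:ℕ) - y, by omega, by rw [show (y:ℕ) + ((x:ℕ) - y) = x by omega, ← hcyc0]⟩
  obtain ⟨j0, c, hc1, hcyc⟩ := hcycex
  set z := ψ^[j0] q1 with hz
  have hloopc : ψ^[c] z = z := by
    rw [hz, ← Function.iterate_add_apply, Nat.add_comm c j0, hcyc]
  -- good loop word accepted
  have hWloop : dstar D.δ z (loopW Dw ψ z c) = z := by
    rw [dstar_loopW D.δ Dw ψ (fun z => rfl) c z, hloopc]
  have hW'loop : dstar D.δ z (loopW Dw' ψ z c) = z := by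
    rw [dstar_loopW D.δ Dw' ψ hψ' c z, hloopc]
  have hWne : loopW Dw ψ z c ≠ [] := by
    rw [show c = (c-1)+1 by omega, loopW]
    simp [hDw, Aw]
  have hW'ne : loopW Dw' ψ z c ≠ [] := by
    rw [show c = (c-1)+1 by omega, loopW]
    simp [hDw', Aw]
  have hWgood : wordOf (dflt n) (U ++ chain j0) (loopW Dw ψ z c) ∈ Ln n := by
    apply mem_Ln_loop (p := ((prefL (Sf z)).map block).flatten)
      (g := Sum.inr true :: ((Sf z).toList.map Sum.inl ++ [Sum.inr false, Sum.inl (If z)]))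
      (s := U ++ loopW Dw ψ (ψ z) (c-1))
    · rw [show c = (c-1)+1 by omega, loopW, hDw]
      simp [Aw, List.append_assoc]
    · refine ⟨(Sf z).toList, If z, ?_, ?_, by simp⟩
      · have := Finset.ne_empty_of_mem (hIS z)
        simpa [Ne, Finset.toList_eq_nil] using this
      · exact Finset.mem_toList.2 (hIS z)
  rw [← hL] at hWgood
  have hHasW : HasAlpha D.δ α z (loopW Dw ψ z c) :=
    loop_alpha_of_lang D α (dflt n) (U ++ chain j0) (loopW Dw ψ z c) z
      ((hreach j0).trans hz.symm) hWloop hWne hWgood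
  have transfer : ∀ k j, HasAlpha D.δ α (ψ^[j] q1) (loopW Dw ψ (ψ^[j] q1) k) →
      HasAlpha D.δ α (ψ^[j] q1) (loopW Dw' ψ (ψ^[j] q1) k) := by
    intro k
    induction k with
    | zero =>
      intro j h
      rw [loopW] at h
      obtain ⟨t, ht, _⟩ := h
      simp at ht
    | succ k ih =>
      intro j h
      rw [loopW, hasAlpha_append] at h
      rw [loopW, hasAlpha_append]
      rcases h with h | h
      · left
        have hDsplit : Dw (ψ^[j] q1)
            = Aw (Sf (ψ^[j] q1)) ++ (Sum.inr false :: Sum.inl (If (ψ^[j] q1)) :: U) := rfl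
        rw [hDsplit, hasAlpha_append] at h
        rcases h with h | h
        · exfalso
          apply hUfree j
          obtain ⟨tail, htail⟩ := hUprefix (Sf (ψ^[j] q1))
          rw [htail, hasAlpha_append]
          exact Or.inl h
        · have hD'split : Dw' (ψ^[j] q1)
              = Aw (Tf (ψ^[j] q1)) ++ (Sum.inr false :: Sum.inl (If (ψ^[j] q1)) :: U) := rfl
          rw [hD'split, hasAlpha_append]
          right
          rwa [← hColl (ψ^[j] q1)]
      · right
        have hrw : ψ (ψ^[j] q1) = ψ^[j+1] q1 := (Function.iterate_succ_apply' ψ j q1).symm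
        rw [show dstar D.δ (ψ^[j] q1) (Dw (ψ^[j] q1)) = ψ (ψ^[j] q1) from rfl, hrw] at h
        have h2 := ih (j+1) h
        rw [show dstar D.δ (ψ^[j] q1) (Dw' (ψ^[j] q1)) = ψ (ψ^[j] q1) from hψ' _, hrw]
        exact h2
  have hW'has : HasAlpha D.δ α z (loopW Dw' ψ z c) := by
    rw [hz] at hHasW ⊢
    exact transfer c j0 hHasW
  have hBall : ∀ k (z' : Q), Blockish n (loopW Dw' ψ z' k) := by
    intro k
    induction k with
    | zero => intro z'; exact Blockish.nil
    | succ k ih =>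
      intro z'
      rw [loopW]
      have hsh : Dw' z' ++ loopW Dw' ψ (ψ z') k
          = ((prefL (Tf z')).map block).flatten ++ (Sum.inr true :: ((Tf z').toList.map Sum.inl
            ++ (Sum.inr false :: Sum.inl (If z') :: (U ++ loopW Dw' ψ (ψ z') k)))) := by
        show (Aw (Tf z') ++ _) ++ _ = _
        rw [Aw]
        simp [List.append_assoc]
      rw [hsh]
      exact Blockish.append (blockish_block_join _)
        (Blockish.b2 _ _ _ (fun hmem => hIT z' (Finset.mem_toList.1 hmem))
          (hUblockish.append (ih _)))
  have hbad := lang_of_loop_alpha D α (dflt n) (U ++ chain j0) (loopW Dw' ψ z c) z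
    ((hreach j0).trans hz.symm) hW'loop hW'ne hW'has
  rw [hL] at hbad
  exact not_mem_Ln_blockish (hBall c z) hW'ne hbad

end SDP
namespace SDP
variable {n : ℕ}

abbrev St (n : ℕ) := (Fin n × Fin 3) ⊕ Fin 3

def delM (n : ℕ) : St n → Sig n → Set (St n) := fun q a =>
  match a with
  | Sum.inr true => {s | ∃ i : Fin n, s = Sum.inl (i, 0)}
  | Sum.inr false =>
    match q with
    | Sum.inl (i, r) => if r = 1 then {Sum.inl (i, 2)} else {Sum.inr 0}
    | Sum.inr _ => {Sum.inr 0}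
  | Sum.inl j =>
    match q with
    | Sum.inl (i, r) =>
      if r = 0 then (if j = i then {Sum.inl (i, 1)} else {Sum.inl (i, 0)})
      else if r = 1 then {Sum.inl (i, 1)} else {Sum.inr 0}
    | Sum.inr _ => {Sum.inr 0}

def alM (n : ℕ) : Set (St n × Sig n × St n) :=
  {tr | ∃ i : Fin n, tr = (Sum.inl (i, 2), Sum.inl i, Sum.inr 0)}

def Mach (n : ℕ) (hn : 0 < n) : tNBW (Sig n) (St n) where
  init := {Sum.inr 0}
  δ := delM n
  α := alM n
  init_nonempty := ⟨_, rfl⟩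
  δ_nonempty := by
    intro q a
    rcases a with j | b
    · rcases q with ⟨i, r⟩ | d
      · simp only [delM]
        split_ifs <;> exact ⟨_, rfl⟩
      · exact ⟨_, rfl⟩
    · rcases b with _ | _
      · rcases q with ⟨i, r⟩ | d
        · simp only [delM]
          split_ifs <;> exact ⟨_, rfl⟩
        · exact ⟨_, rfl⟩
      · exact ⟨Sum.inl (⟨0, hn⟩, 0), ⟨_, rfl⟩⟩

lemma delM_u {p : St n} {a : Sig n} {i : Fin n}
    (hs : Sum.inl (i, (2 : Fin 3)) ∈ delM n p a) :
    a = Sum.inr false ∧ p = Sum.inl (i, (1 : Fin 3)) := by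
  rcases a with j | b
  · rcases p with ⟨i', r⟩ | d
    · simp only [delM] at hs
      split_ifs at hs <;> simp_all <;> exact absurd hs.2 (by decide)
    · simp only [delM] at hs; simp_all
  · rcases b with _ | _
    · rcases p with ⟨i', r⟩ | d
      · simp only [delM] at hs
        split_ifs at hs with h1 <;> simp_all
      · simp only [delM] at hs; simp_all
    · simp only [delM, Set.mem_setOf_eq] at hs
      obtain ⟨i', hi'⟩ := hs
      simp at hi'

lemma delM_t {p : St n} {a : Sig n} {i : Fin n}
    (hs : Sum.inl (i, (1 : Fin 3)) ∈ delM n p a) :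
    ∃ j : Fin n, a = Sum.inl j ∧ ((j = i ∧ p = Sum.inl (i, (0 : Fin 3))) ∨ p = Sum.inl (i, (1 : Fin 3))) := by
  rcases a with j | b
  · rcases p with ⟨i', r⟩ | d
    · simp only [delM] at hs
      refine ⟨j, rfl, ?_⟩
      split_ifs at hs with h1 h2 h3 <;> simp_all
    · simp only [delM] at hs; simp_all
  · rcases b with _ | _
    · rcases p with ⟨i', r⟩ | d
      · simp only [delM] at hs
        split_ifs at hs <;> simp_all <;> exact absurd hs.2 (by decide)
      · simp only [delM] at hs; simp_all
    · simp only [delM, Set.mem_setOf_eq] at hs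
      obtain ⟨i', hi'⟩ := hs
      simp at hi'

lemma delM_s {p : St n} {a : Sig n} {i : Fin n}
    (hs : Sum.inl (i, (0 : Fin 3)) ∈ delM n p a) :
    a = Sum.inr true ∨ (∃ j : Fin n, j ≠ i ∧ a = Sum.inl j ∧ p = Sum.inl (i, (0 : Fin 3))) := by
  rcases a with j | b
  · rcases p with ⟨i', r⟩ | d
    · simp only [delM] at hs
      right
      split_ifs at hs with h1 h2 h3 <;> simp_all
    · simp only [delM] at hs; simp_all
  · rcases b with _ | _
    · rcases p with ⟨i', r⟩ | d
      · simp only [delM] at hs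
        split_ifs at hs <;> simp_all <;> exact absurd hs.2 (by decide)
      · simp only [delM] at hs; simp_all
    · exact Or.inl rfl

end SDP
namespace SDP
variable {n : ℕ}

lemma traceback {w : ℕ → Sig n} {r : ℕ → St n}
    (hrun : ∀ m, r (m + 1) ∈ delM n (r m) (w m)) (i : Fin n) :
    ∀ m, (r m = Sum.inl (i, (0:Fin 3)) ∨ r m = Sum.inl (i, (1:Fin 3))) →
      (∀ t, t ≤ m → r t = Sum.inl (i, (0:Fin 3)) ∨ r t = Sum.inl (i, (1:Fin 3))) ∨
      ∃ a, a < m ∧ w a = Sum.inr true ∧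
        (∀ t, a < t → t ≤ m → r t = Sum.inl (i, (0:Fin 3)) ∨ r t = Sum.inl (i, (1:Fin 3))) ∧
        (∀ t, a < t → t < m → ∃ j, w t = Sum.inl j) ∧
        (r m = Sum.inl (i, (1:Fin 3)) → ∃ t, a < t ∧ t < m ∧ w t = Sum.inl i) := by
  intro m
  induction m with
  | zero =>
    intro h
    left
    intro t ht
    rw [Nat.le_zero.1 ht]
    exact h
  | succ m ih =>
    intro h
    have hstep := hrun m
    rcases h with hs | ht
    · -- r (m+1) = s_i
      rw [hs] at hstep
      rcases delM_s hstep with hdol | ⟨j, hji, hwm, hrm⟩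
      · -- w m = $ : start found at a := m
        right
        refine ⟨m, by omega, hdol, ?_, ?_, ?_⟩
        · intro t h1 h2
          have : t = m + 1 := by omega
          rw [this]
          exact Or.inl hs
        · intro t h1 h2
          omega
        · intro hcon
          rw [hs] at hcon
          simp at hcon
      · -- continue chain
        rcases ih (Or.inl hrm) with hall | ⟨a, ham, hwa, hst, hlet, _⟩
        · left
          intro t ht
          rcases Nat.lt_or_ge t (m+1) with h' | h'
          · exact hall t (by omega)
          · rw [show t = m + 1 by omega]
            exact Or.inl hs
        · right
          refine ⟨a, by omega, hwa, ?_, ?_, ?_⟩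
          · intro t h1 h2
            rcases Nat.lt_or_ge t (m+1) with h' | h'
            · exact hst t h1 (by omega)
            · rw [show t = m + 1 by omega]
              exact Or.inl hs
          · intro t h1 h2
            rcases Nat.lt_or_ge t m with h' | h'
            · exact hlet t h1 h'
            · exact ⟨j, by rw [show t = m by omega]; exact hwm⟩
          · intro hcon
            rw [hs] at hcon
            simp at hcon
    · -- r (m+1) = t_i
      rw [ht] at hstep
      obtain ⟨j, hwm, hcase⟩ := delM_t hstep
      rcases hcase with ⟨hji, hrm⟩ | hrm
      · -- transition s_i → t_i at position m
        rcases ih (Or.inl hrm) with hall | ⟨a, ham, hwa, hst, hlet, _⟩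
        · left
          intro t hle
          rcases Nat.lt_or_ge t (m+1) with h' | h'
          · exact hall t (by omega)
          · rw [show t = m + 1 by omega]
            exact Or.inr ht
        · right
          refine ⟨a, by omega, hwa, ?_, ?_, ?_⟩
          · intro t h1 h2
            rcases Nat.lt_or_ge t (m+1) with h' | h'
            · exact hst t h1 (by omega)
            · rw [show t = m + 1 by omega]
              exact Or.inr ht
          · intro t h1 h2
            rcases Nat.lt_or_ge t m with h' | h'
            · exact hlet t h1 h'
            · exact ⟨j, by rw [show t = m by omega]; exact hwm⟩
          · intro _
            exact ⟨m, by omega, by omega, by rw [hji] at hwm; exact hwm⟩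
      · -- was already t_i
        rcases ih (Or.inr hrm) with hall | ⟨a, ham, hwa, hst, hlet, hcl⟩
        · left
          intro t hle
          rcases Nat.lt_or_ge t (m+1) with h' | h'
          · exact hall t (by omega)
          · rw [show t = m + 1 by omega]
            exact Or.inr ht
        · right
          refine ⟨a, by omega, hwa, ?_, ?_, ?_⟩
          · intro t h1 h2
            rcases Nat.lt_or_ge t (m+1) with h' | h'
            · exact hst t h1 (by omega)
            · rw [show t = m + 1 by omega]
              exact Or.inr ht
          · intro t h1 h2
            rcases Nat.lt_or_ge t m with h' | h'
            · exact hlet t h1 h'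
            · exact ⟨j, by rw [show t = m by omega]; exact hwm⟩
          · intro _
            obtain ⟨t, h1, h2, h3⟩ := hcl hrm
            exact ⟨t, h1, by omega, h3⟩

end SDP
namespace SDP
variable {n : ℕ}

lemma langFrom_sub (hn : 0 < n) (q : St n) : tNBW.LangFrom (Mach n hn) q ⊆ Ln n := by
  intro w hw
  obtain ⟨r, hr0, hrun, hfreq⟩ := hw
  rw [Filter.frequently_atTop] at hfreq
  simp only [Ln, InfInfix, Set.mem_setOf_eq]
  intro N
  obtain ⟨m1, hm1, hα1⟩ := hfreq N
  obtain ⟨m2, hm2, hα2⟩ := hfreq (m1 + 1)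
  obtain ⟨i1, he1⟩ := hα1
  obtain ⟨i2, he2⟩ := hα2
  have e1 : r m1 = Sum.inl (i1, 2) := by
    have := congrArg (fun p => p.1) he1
    simpa using this
  have e2a : r m2 = Sum.inl (i2, 2) := by
    have := congrArg (fun p => p.1) he2
    simpa using this
  have e2b : w m2 = Sum.inl i2 := by
    have := congrArg (fun p => p.2.1) he2
    simpa using this
  have hm2pos : 1 ≤ m2 := by omega
  have hstep := hrun (m2 - 1)
  rw [show m2 - 1 + 1 = m2 by omega, e2a] at hstep
  obtain ⟨hwprev, hrprev⟩ := delM_u hstep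
  rcases traceback hrun i2 (m2-1) (Or.inr hrprev) with hall | ⟨a, ham, hwa, hst, hlet, hcl⟩
  · exfalso
    rcases hall m1 (by omega) with h | h <;> (rw [e1] at h; simp at h)
  · have ham1 : m1 ≤ a := by
      by_contra hca
      push_neg at hca
      rcases hst m1 (by omega) (by omega) with h | h <;> (rw [e1] at h; simp at h)
    obtain ⟨t0, ht0a, ht0b, hwt0⟩ := hcl hrprev
    set X : List (Fin n) := List.ofFn (fun k : Fin (m2 - 1 - (a + 1)) =>
      match w (a + 1 + (k : ℕ)) with
      | Sum.inl j => j
      | Sum.inr _ => ⟨0, hn⟩) with hX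
    have hXlen : X.length = m2 - 1 - (a + 1) := by simp [hX]
    refine ⟨a, X.length + 3, by omega, X, i2, ?_, ?_, ?_⟩
    · intro hnil
      have := congrArg List.length hnil
      rw [hXlen] at this
      simp at this
      omega
    · have hidx : t0 - (a+1) < X.length := by omega
      have hval : X[t0 - (a+1)]'hidx = i2 := by
        simp only [hX, List.getElem_ofFn]
        rw [show a + 1 + (t0 - (a+1)) = t0 by omega, hwt0]
      rw [← hval]
      exact List.getElem_mem _
    · apply List.ext_getElem
      · simp [seg]
      · intro k h1 h2
        simp only [seg, List.getElem_ofFn]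
        obtain hk0 | ⟨k', rfl⟩ : k = 0 ∨ ∃ k', k = k' + 1 :=
          (by rcases k with _ | k' <;> [exact Or.inl rfl; exact Or.inr ⟨k', rfl⟩])
        · subst hk0
          simpa using hwa
        · simp only [List.cons_append]
          rw [List.getElem_cons_succ]
          by_cases hk2 : k' < X.length
          · rw [List.getElem_append_left (by simpa using hk2)]
            obtain ⟨j, hj⟩ := hlet (a + k' + 1) (by omega) (by omega)
            have hXk : X[k']'hk2 = j := by
              simp only [hX, List.getElem_ofFn]
              rw [show a + 1 + k' = a + k' + 1 by omega, hj]
            rw [List.getElem_map]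
            rw [hXk, show (a + ↑(⟨k' + 1, h1⟩ : Fin _)) = a + k' + 1 by simp; omega, hj]
          · push_neg at hk2
            rw [List.getElem_append_right (by simpa using hk2)]
            have hklt : k' < X.length + 2 := by
              have h1' : (k' + 1) < X.length + 3 := by simp [seg] at h1; omega
              omega
            obtain hceq | hceq : k' = X.length ∨ k' = X.length + 1 := by omega
            · subst hceq
              simp only [List.length_map, Nat.sub_self, List.getElem_cons_zero]
              rw [show (a + ↑(⟨X.length + 1, h1⟩ : Fin _)) = m2 - 1 by simp; omega]
              exact hwprev
            · subst hceq
              simp only [List.length_map, show X.length + 1 - X.length = 1 from by omega,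
                List.getElem_cons_succ, List.getElem_cons_zero]
              rw [show (a + ↑(⟨X.length + 1 + 1, h1⟩ : Fin _)) = m2 by simp; omega]
              exact e2b

end SDP
namespace SDP
variable {n : ℕ}

def stepD (hn : 0 < n) (mk : ℕ → Fin n) : St n → Sig n → ℕ → St n :=
  fun q c p =>
    match c with
    | Sum.inr true => Sum.inl (mk p, 0)
    | Sum.inr false =>
      match q with
      | Sum.inl (i, r) => if r = 1 then Sum.inl (i, 2) else Sum.inr 0
      | Sum.inr _ => Sum.inr 0
    | Sum.inl j =>
      match q with
      | Sum.inl (i, r) =>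
        if r = 0 then (if j = i then Sum.inl (i, 1) else Sum.inl (i, 0))
        else if r = 1 then Sum.inl (i, 1) else Sum.inr 0
      | Sum.inr _ => Sum.inr 0

lemma stepD_mem (hn : 0 < n) (mk : ℕ → Fin n) (q : St n) (c : Sig n) (p : ℕ) :
    stepD hn mk q c p ∈ delM n q c := by
  rcases c with j | b
  · rcases q with ⟨i, r⟩ | d
    · simp only [stepD, delM]
      split_ifs <;> rfl
    · rfl
  · rcases b with _ | _
    · rcases q with ⟨i, r⟩ | d
      · simp only [stepD, delM]
        split_ifs <;> rfl
      · rfl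
    · exact ⟨mk p, rfl⟩

lemma seg_letter {w : ℕ → Sig n} {aa len : ℕ} {L : List (Sig n)} (h : seg w aa len = L)
    {k : ℕ} (hk : k < len) : w (aa + k) = L.getD k (dflt n) := by
  subst h
  rw [List.getD_eq_getElem _ _ (by simp [seg]; omega)]
  simp [seg]

lemma Ln_sub_langFrom (hn : 0 < n) (q : St n) : Ln n ⊆ tNBW.LangFrom (Mach n hn) q := by
  intro w hw
  simp only [Ln, InfInfix, Set.mem_setOf_eq] at hw
  have hch : ∀ N, ∃ a, N ≤ a ∧ ∃ (x : List (Fin n)) (i : Fin n), x ≠ [] ∧ i ∈ x ∧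
      seg w a (x.length + 3) = Sum.inr true :: x.map Sum.inl ++ [Sum.inr false, Sum.inl i] := by
    intro N
    obtain ⟨a, len, hN, hgood⟩ := hw N
    obtain ⟨x, i, hx, hix, hshape⟩ := hgood
    have hlen : len = x.length + 3 := by
      have := congrArg List.length hshape
      simpa [seg] using this
    exact ⟨a, hN, x, i, hx, hix, by rw [← hlen]; exact hshape⟩
  choose af haf xf If hxne hxmem hxseg using hch
  set Ns : ℕ → ℕ := fun k => Nat.rec 0 (fun _ Nk => af Nk + 1) k with hNs
  set A : ℕ → ℕ := fun k => af (Ns k) with hA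
  set X : ℕ → List (Fin n) := fun k => xf (Ns k) with hX
  set I : ℕ → Fin n := fun k => If (Ns k) with hI
  have hAmono : ∀ k, A k + 1 ≤ A (k+1) := by
    intro k
    have h1 : Ns (k+1) = A k + 1 := rfl
    have := haf (Ns (k+1))
    rw [h1] at this
    calc A k + 1 ≤ af (A k + 1) := haf _
      _ = A (k+1) := rfl
  have hAk : ∀ k, k ≤ A k := by
    intro k
    induction k with
    | zero => omega
    | succ k ih => have := hAmono k; omega
  have hAlt : ∀ {k l}, k < l → A k < A l := by
    intro k l h
    induction l with
    | zero => omega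
    | succ l ih =>
      have := hAmono l
      rcases Nat.lt_or_ge k l with h' | h'
      · have := ih h'; omega
      · have : k = l := by omega
        subst this; omega
  have hAinj : Function.Injective A := by
    intro k l h
    rcases Nat.lt_trichotomy k l with h' | h' | h'
    · exact absurd h (by have := hAlt h'; omega)
    · exact h'
    · exact absurd h (by have := hAlt h'; omega)
  -- letters
  have hseg' : ∀ k, seg w (A k) ((X k).length + 3)
      = Sum.inr true :: (X k).map Sum.inl ++ [Sum.inr false, Sum.inl (I k)] :=
    fun k => hxseg (Ns k)
  have hwd : ∀ k, w (A k) = Sum.inr true := by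
    intro k
    have h0 := seg_letter (hseg' k) (show 0 < (X k).length + 3 by omega)
    simpa using h0
  have hwx : ∀ k t (ht : t < (X k).length), w (A k + 1 + t) = Sum.inl ((X k)[t]'ht) := by
    intro k t ht
    have h0 := seg_letter (hseg' k) (show t + 1 < (X k).length + 3 by omega)
    rw [show A k + 1 + t = A k + (t + 1) by omega, h0,
      List.getD_eq_getElem _ _ (by simp; omega)]
    simp only [List.cons_append, List.getElem_cons_succ]
    rw [List.getElem_append_left (by simpa using ht), List.getElem_map]
  have hwh : ∀ k, w (A k + (X k).length + 1) = Sum.inr false := by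
    intro k
    have h0 := seg_letter (hseg' k) (show (X k).length + 1 < (X k).length + 3 by omega)
    rw [show A k + (X k).length + 1 = A k + ((X k).length + 1) by omega, h0,
      List.getD_eq_getElem _ _ (by simp)]
    simp only [List.cons_append, List.getElem_cons_succ]
    rw [List.getElem_append_right (by simp)]
    simp
  have hwi : ∀ k, w (A k + (X k).length + 2) = Sum.inl (I k) := by
    intro k
    have h0 := seg_letter (hseg' k) (show (X k).length + 2 < (X k).length + 3 by omega)
    rw [show A k + (X k).length + 2 = A k + ((X k).length + 2) by omega, h0,
      List.getD_eq_getElem _ _ (by simp)]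
    simp only [List.cons_append,
      show (X k).length + 2 = ((X k).length + 1) + 1 from by omega, List.getElem_cons_succ]
    rw [List.getElem_append_right (by simp)]
    simp only [List.length_map, show (X k).length + 1 - (X k).length = 1 from by omega,
      List.getElem_cons_succ, List.getElem_cons_zero]
  -- mark function
  classical
  set mk : ℕ → Fin n := fun p => if h : ∃ k, A k = p then I h.choose else ⟨0, hn⟩ with hmk
  have hmk_at : ∀ k, mk (A k) = I k := by
    intro k
    have hex : ∃ k', A k' = A k := ⟨k, rfl⟩
    have : mk (A k) = I hex.choose := by rw [hmk]; exact dif_pos hex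
    rw [this, hAinj hex.choose_spec]
  -- run
  set r : ℕ → St n := fun m => Nat.rec q (fun m' qp => stepD hn mk qp (w m') m') m with hrr
  have hr0 : r 0 = q := rfl
  have hrS : ∀ m, r (m+1) = stepD hn mk (r m) (w m) m := fun m => rfl
  have hvalid : ∀ m, r (m + 1) ∈ delM n (r m) (w m) := by
    intro m
    rw [hrS]
    exact stepD_mem hn mk (r m) (w m) m
  -- tracking
  have htrack1 : ∀ k, r (A k + 1) = Sum.inl (I k, 0) := by
    intro k
    rw [hrS, hwd k]
    show Sum.inl (mk (A k), 0) = _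
    rw [hmk_at]
  have htrack2 : ∀ k t, t ≤ (X k).length →
      r (A k + 1 + t) = Sum.inl (I k, 1) ∨
      (r (A k + 1 + t) = Sum.inl (I k, 0) ∧ I k ∉ (X k).take t) := by
    intro k t
    induction t with
    | zero =>
      intro _
      right
      exact ⟨by simpa using htrack1 k, by simp⟩
    | succ t ih =>
      intro ht
      have ht' : t < (X k).length := by omega
      have hlet := hwx k t ht'
      have hstep : r (A k + 1 + (t+1)) = stepD hn mk (r (A k + 1 + t)) (w (A k + 1 + t)) (A k + 1 + t) := by
        rw [show A k + 1 + (t+1) = (A k + 1 + t) + 1 by omega, hrS]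
      rcases ih (by omega) with h | ⟨h, hnotin⟩
      · left
        rw [hstep, h, hlet]
        simp [stepD]
      · rw [hstep, h, hlet]
        by_cases hji : (X k)[t]'ht' = I k
        · left
          simp [stepD, hji]
        · right
          refine ⟨by simp [stepD, hji], ?_⟩
          rw [List.take_succ, List.getElem?_eq_getElem ht']
          simp only [Option.toList_some, List.mem_append, List.mem_singleton]
          rintro (h1 | h2)
          · exact hnotin h1
          · exact hji h2.symm
  have htrack3 : ∀ k, r (A k + 1 + (X k).length) = Sum.inl (I k, 1) := by
    intro k
    rcases htrack2 k (X k).length le_rfl with h | ⟨h, hno⟩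
    · exact h
    · rw [List.take_length] at hno
      exact absurd (hxmem (Ns k)) hno
  have htrack4 : ∀ k, r (A k + (X k).length + 2) = Sum.inl (I k, 2) := by
    intro k
    rw [show A k + (X k).length + 2 = (A k + 1 + (X k).length) + 1 by omega, hrS,
      show A k + 1 + (X k).length = A k + (X k).length + 1 by omega, hwh k,
      show A k + (X k).length + 1 = A k + 1 + (X k).length by omega, htrack3 k]
    simp [stepD]
  have htrack5 : ∀ k, (r (A k + (X k).length + 2), w (A k + (X k).length + 2),
      r (A k + (X k).length + 2 + 1)) ∈ alM n := by
    intro k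
    refine ⟨I k, ?_⟩
    rw [htrack4 k, hwi k, hrS (A k + (X k).length + 2), htrack4 k, hwi k]
    simp [stepD]
  refine ⟨r, hr0, hvalid, ?_⟩
  rw [Filter.frequently_atTop]
  intro N
  refine ⟨A N + (X N).length + 2, by have := hAk N; omega, ?_⟩
  exact htrack5 N

end SDP
namespace SDP
variable {n : ℕ}

lemma master (hn : 0 < n) (q : St n) : tNBW.LangFrom (Mach n hn) q = Ln n :=
  Set.Subset.antisymm (langFrom_sub hn q) (Ln_sub_langFrom hn q)

end SDP

/-- `L_n` is recognized by an SD-tNBW with `3n+3` states, but every tDBW for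
`L_n` needs at least `2^n` states. -/
theorem sd_tnbw_succinct (n : ℕ) (hn : 1 ≤ n) :
    (∃ (Q : Type) (_ : Fintype Q) (M : tNBW (Sig n) Q),
        Fintype.card Q = 3 * n + 3 ∧ M.SD ∧ M.Lang = Ln n) ∧
    (∀ (Q : Type) (_ : Fintype Q) (D : tDBW (Sig n) Q) (α : Set (Q × Sig n × Q)),
        D.Lang α = Ln n → 2 ^ n ≤ Fintype.card Q) := by
  have hn' : 0 < n := hn
  constructor
  · refine ⟨SDP.St n, inferInstance, SDP.Mach n hn', ?_, ?_, ?_⟩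
    · simp only [SDP.St, Fintype.card_sum, Fintype.card_prod, Fintype.card_fin]
      ring
    · constructor
      · intro q1 _ q2 _
        rw [SDP.master hn' q1, SDP.master hn' q2]
      · intro q a q1 _ q2 _
        rw [SDP.master hn' q1, SDP.master hn' q2]
    · ext w
      constructor
      · rintro ⟨q, _, hq⟩
        rw [← SDP.master hn' q]
        exact hq
      · intro hw
        exact ⟨Sum.inr 0, rfl, by rw [SDP.master hn' _]; exact hw⟩
  · intro Q fQ D α hL
    exact @SDP.dbw_lower n Q fQ hn D α hL
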